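/- Let σ1, σ2, t0 be real numbers with 0 ≤ σ1 and 2σ1 ≤ σ2. Let J be a finite nonempty index set and for each j ∈ J let A_j ⊆ ℝ be a finite set of 'satisfaction times'. Assume: (separation) for all j, j' ∈ J and all a ∈ A_j, a' ∈ A_{j'} with a ≤ a', the gap a' − a does not lie in the interval (σ1, σ2]; and (occurrence) for every j ∈ J there exists a_j ∈ A_j with t0 ≤ a_j ≤ t0 + σ2. Then there exists t* ∈ [t0, t0 + σ1 + σ2] such that for every j ∈ J there exists t_j* ∈ A_j with t* − σ1 ≤ t_j* ≤ t*. -/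
import Mathlib

/-- Timing core of the paper's Lemma 3: if the satisfaction times of every node occur
within a window of length `σ2`, and gaps between any two satisfaction times never lie
in `(σ1, σ2]`, then all nodes have satisfaction times clustered in a common subwindow
of length `σ1` ending at some `t* ∈ [t0, t0 + σ1 + σ2]`. -/
theorem stmt_2 (σ1 σ2 t0 : ℝ) (hσ1 : 0 ≤ σ1) (hσ2 : 2 * σ1 ≤ σ2)
    {J : Type*} [Fintype J] [Nonempty J] (A : J → Finset ℝ)
    (hsep : ∀ j j' : J, ∀ a ∈ A j, ∀ a' ∈ A j', a ≤ a' → a' - a ∉ Set.Ioc σ1 σ2)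
    (hocc : ∀ j : J, ∃ a ∈ A j, t0 ≤ a ∧ a ≤ t0 + σ2) :
    ∃ tstar : ℝ, tstar ∈ Set.Icc t0 (t0 + σ1 + σ2) ∧
      ∀ j : J, ∃ tj ∈ A j, tstar - σ1 ≤ tj ∧ tj ≤ tstar := by
  choose c hc h1 h2 using hocc
  obtain ⟨j0, -, hj0⟩ := Finset.exists_max_image Finset.univ c
    ⟨Classical.arbitrary J, Finset.mem_univ _⟩
  refine ⟨c j0, ⟨h1 j0, by linarith [h2 j0]⟩, fun j => ?_⟩
  have hle : c j ≤ c j0 := hj0 j (Finset.mem_univ j)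
  have hns := hsep j j0 (c j) (hc j) (c j0) (hc j0) hle
  simp only [Set.mem_Ioc, not_and, not_le] at hns
  refine ⟨c j, hc j, ?_, hle⟩
  by_contra h
  push_neg at h
  have : c j0 - c j ≤ σ2 := by linarith [h1 j, h2 j0]
  linarith [hns (by linarith)]
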